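/- Fix a mass m > 0 and an order l ∈ ℕ. For every v ∈ K^l_m with v ≠ 0 (as an element of L²(ℝ³, ℂ)) there exists w ∈ K^l_m such that Im⟨v, w⟩ ≠ 0, where ⟨·,·⟩ is the L² inner product. In other words, the antisymmetric real bilinear form (v,w) ↦ Im⟨v,w⟩ is nondegenerate on K^l_m, so K^l_m is a symplectic subspace. (This is the statement that the test-distribution space 𝒫^l(γ_i) of an inertial observer is a symplectic subspace of the one-particle phase space of the free scalar field.) -/

import Mathlib

open MeasureTheory

noncomputable section

/-- `λ_m(ξ) = √(|ξ|² + m²)` on ℝ³. -/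
def lamm (m : ℝ) (ξ : EuclideanSpace ℝ (Fin 3)) : ℝ :=
  Real.sqrt (∑ i, ξ i ^ 2 + m ^ 2)

/-- The multi-indices `α ∈ ℕ³` with `|α| ≤ l`, as a finite set. -/
def multiIdx (l : ℕ) : Finset (Fin 3 → ℕ) :=
  (Fintype.piFinset fun _ => Finset.range (l + 1)).filter fun α => (∑ i, α i) ≤ l

/-- The function `ξ ↦ Σ_{|α| ≤ l} (−i)^{|α|} â_α(λ_m(ξ)) ξ^α λ_m(ξ)^{−1/2}` determined
by a family of coefficient functions `a_α : ℝ → ℝ`. -/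
def KElem (m : ℝ) (l : ℕ) (a : (Fin 3 → ℕ) → ℝ → ℝ) (ξ : EuclideanSpace ℝ (Fin 3)) : ℂ :=
  ∑ α ∈ multiIdx l,
    (-Complex.I) ^ (∑ i, α i) *
      VectorFourier.fourierIntegral Real.fourierChar volume (innerₗ ℝ) (fun t => (a α t : ℂ)) (lamm m ξ) *
      (∏ i, (ξ i : ℂ) ^ α i) *
      ((1 / Real.sqrt (lamm m ξ) : ℝ) : ℂ)

/-- The real-linear subspace `K^l_m ⊆ L²(ℝ³, ℂ)`: a.e.-classes of the functions `KElem m l a`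
where each `a_α` is smooth, compactly supported and real-valued. -/
def Kset (m : ℝ) (l : ℕ) : Set (Lp ℂ 2 (volume : Measure (EuclideanSpace ℝ (Fin 3)))) :=
  { v | ∃ a : (Fin 3 → ℕ) → ℝ → ℝ,
      (∀ α, ContDiff ℝ (⊤ : ℕ∞) (a α)) ∧ (∀ α, HasCompactSupport (a α)) ∧
      (v : EuclideanSpace ℝ (Fin 3) → ℂ) =ᵐ[volume] KElem m l a }
section KAux
open FourierTransform Complex

lemma sumsq_nonneg (ξ : EuclideanSpace ℝ (Fin 3)) : (0:ℝ) ≤ ∑ i, ξ i ^ 2 :=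
  Finset.sum_nonneg fun i _ => sq_nonneg _

lemma lamm_sq (m : ℝ) (ξ : EuclideanSpace ℝ (Fin 3)) : lamm m ξ ^ 2 = ∑ i, ξ i ^ 2 + m ^ 2 :=
  Real.sq_sqrt (by have := sumsq_nonneg ξ; positivity)

lemma m_le_lamm {m : ℝ} (hm : 0 < m) (ξ : EuclideanSpace ℝ (Fin 3)) : m ≤ lamm m ξ := by
  have h0 := sumsq_nonneg ξ
  rw [lamm, Real.le_sqrt hm.le (by positivity)]
  linarith

lemma lamm_pos {m : ℝ} (hm : 0 < m) (ξ : EuclideanSpace ℝ (Fin 3)) : 0 < lamm m ξ :=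
  hm.trans_le (m_le_lamm hm ξ)

lemma lamm_nonneg (m : ℝ) (ξ : EuclideanSpace ℝ (Fin 3)) : 0 ≤ lamm m ξ := Real.sqrt_nonneg _

lemma abs_apply_le_lamm (m : ℝ) (ξ : EuclideanSpace ℝ (Fin 3)) (i : Fin 3) : |ξ i| ≤ lamm m ξ := by
  have h1 : |ξ i| = Real.sqrt (ξ i ^ 2) := (Real.sqrt_sq_eq_abs _).symm
  rw [h1, lamm]
  apply Real.sqrt_le_sqrt
  have : ξ i ^ 2 ≤ ∑ j, ξ j ^ 2 :=
    Finset.single_le_sum (f := fun j => ξ j ^ 2) (fun j _ => sq_nonneg _) (Finset.mem_univ i)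
  nlinarith [sq_nonneg m]

lemma continuous_lamm (m : ℝ) : Continuous (lamm m) := by
  apply Real.continuous_sqrt.comp
  exact (continuous_finset_sum _ fun i _ => ((continuous_apply i).comp (PiLp.continuous_ofLp 2 _)).pow 2).add continuous_const

lemma norm_sq_eq (ξ : EuclideanSpace ℝ (Fin 3)) : ‖ξ‖ ^ 2 = ∑ i, ξ i ^ 2 := by
  rw [EuclideanSpace.norm_eq, Real.sq_sqrt (Finset.sum_nonneg fun i _ => by positivity)]
  simp [sq_abs]

section Fdecay
variable {f : ℝ → ℝ}

lemma diffble_ofReal_comp (hf : ContDiff ℝ (⊤ : ℕ∞) f) :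
    Differentiable ℝ (fun t => (f t : ℂ)) :=
  fun t => ((hf.differentiable (by simp)) t).hasDerivAt.ofReal_comp.differentiableAt

lemma deriv_ofReal_comp (hf : ContDiff ℝ (⊤ : ℕ∞) f) :
    deriv (fun t => (f t : ℂ)) = fun t => ((deriv f t : ℝ) : ℂ) := by
  funext t
  exact (((hf.differentiable (by simp)) t).hasDerivAt.ofReal_comp).deriv

lemma integrable_ofReal_comp (hf : Continuous f) (hc : HasCompactSupport f) :
    Integrable (fun t => (f t : ℂ)) volume :=
  Continuous.integrable_of_hasCompactSupport (Complex.continuous_ofReal.comp hf)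
    (hc.comp_left (g := fun x : ℝ => (x : ℂ)) Complex.ofReal_zero)

lemma contDiff_deriv (hf : ContDiff ℝ (⊤ : ℕ∞) f) : ContDiff ℝ (⊤ : ℕ∞) (deriv f) :=
  (contDiff_infty_iff_deriv.mp (by exact_mod_cast hf)).2

/-- |x|^k decay of the Fourier transform of a smooth compactly supported function. -/
lemma fourier_decay (hf : ContDiff ℝ (⊤ : ℕ∞) f) (hc : HasCompactSupport f) (k : ℕ) :
    ∃ C : ℝ, 0 ≤ C ∧ ∀ x : ℝ, |x| ^ k * ‖𝓕 (fun t => (f t : ℂ)) x‖ ≤ C := by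
  induction k generalizing f with
  | zero =>
    refine ⟨∫ t, ‖(f t : ℂ)‖, integral_nonneg fun t => norm_nonneg _, fun x => ?_⟩
    rw [pow_zero, one_mul]; exact VectorFourier.norm_fourierIntegral_le_integral_norm Real.fourierChar volume (innerₗ ℝ) (fun t => (f t : ℂ)) x
  | succ k ih =>
    obtain ⟨C, hC0, hC⟩ := ih (contDiff_deriv hf) hc.deriv
    refine ⟨C / (2 * Real.pi), by positivity, fun x => ?_⟩
    set G := 𝓕 (fun t => (f t : ℂ)) with hG
    have hd : 𝓕 (deriv (fun t => (f t : ℂ))) =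
        fun x : ℝ => (2 * Real.pi * I * x) • (G x) :=
      Real.fourier_deriv (integrable_ofReal_comp hf.continuous hc)
        (diffble_ofReal_comp hf)
        (by rw [deriv_ofReal_comp hf]
            exact integrable_ofReal_comp (contDiff_deriv hf).continuous hc.deriv)
    have key : |x| ^ k * ‖𝓕 (fun t => ((deriv f t : ℝ) : ℂ)) x‖ ≤ C := hC x
    rw [← deriv_ofReal_comp hf, hd] at key
    have hnorm : ‖(2 * Real.pi * I * (x:ℂ)) • G x‖ = (2 * Real.pi) * (|x| * ‖G x‖) := by
      rw [norm_smul]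
      simp [abs_of_pos Real.pi_pos, Complex.norm_real]
      ring
    rw [hnorm] at key
    have hπ : (0:ℝ) < 2 * Real.pi := by positivity
    have heq : |x| ^ (k+1) * ‖G x‖ = (|x| ^ k * (2 * Real.pi * (|x| * ‖G x‖))) / (2 * Real.pi) := by
      field_simp; ring
    rw [heq]
    exact (div_le_div_iff_of_pos_right hπ).mpr key


lemma fourier_decay_poly (hf : ContDiff ℝ (⊤ : ℕ∞) f) (hc : HasCompactSupport f) (j : ℕ) :
    ∃ C : ℝ, 0 ≤ C ∧ ∀ x : ℝ, (1 + x ^ 2) ^ j * ‖𝓕 (fun t => (f t : ℂ)) x‖ ≤ C := by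
  choose C hC0 hC using fourier_decay hf hc
  refine ⟨∑ i ∈ Finset.range (j+1), (j.choose i : ℝ) * C (2*i),
    Finset.sum_nonneg fun i _ => mul_nonneg (Nat.cast_nonneg _) (hC0 _), fun x => ?_⟩
  have hexp : (1 + x ^ 2) ^ j = ∑ i ∈ Finset.range (j+1), (x ^ 2) ^ i * (j.choose i : ℝ) := by
    rw [add_comm, add_pow]
    exact Finset.sum_congr rfl fun i _ => by rw [one_pow, mul_one]
  rw [hexp, Finset.sum_mul]
  apply Finset.sum_le_sum
  intro i _
  have h1 : (x ^ 2) ^ i = |x| ^ (2*i) := by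
    rw [← _root_.sq_abs, ← pow_mul]
  rw [h1]
  calc |x| ^ (2*i) * (j.choose i : ℝ) * ‖𝓕 (fun t => (f t : ℂ)) x‖
      = (j.choose i : ℝ) * (|x| ^ (2*i) * ‖𝓕 (fun t => (f t : ℂ)) x‖) := by ring
    _ ≤ (j.choose i : ℝ) * C (2*i) := by
        exact mul_le_mul_of_nonneg_left (hC (2*i) x) (by positivity)

end Fdecay

variable {m : ℝ} {l : ℕ} {a : (Fin 3 → ℕ) → ℝ → ℝ}

lemma KElem_bound (hm : 0 < m)
    (ha : ∀ α, ContDiff ℝ (⊤ : ℕ∞) (a α)) (hc : ∀ α, HasCompactSupport (a α)) :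
    ∃ C : ℝ, 0 ≤ C ∧ ∀ ξ, ‖KElem m l a ξ‖ ≤ C * ((1 + lamm m ξ ^ 2) ^ 2)⁻¹ := by
  choose D hD0 hD using fun α => fourier_decay_poly (ha α) (hc α) (l + 2)
  refine ⟨(∑ α ∈ multiIdx l, D α) / Real.sqrt m,
    div_nonneg (Finset.sum_nonneg fun α _ => hD0 α) (Real.sqrt_nonneg m), fun ξ => ?_⟩
  set y := lamm m ξ with hy
  have hy0 : 0 < y := lamm_pos hm ξ
  have hym : m ≤ y := m_le_lamm hm ξ
  have h1y : (1:ℝ) ≤ 1 + y ^ 2 := by nlinarith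
  have h1ypos : (0:ℝ) < 1 + y ^ 2 := by linarith
  rw [KElem, Finset.sum_div, Finset.sum_mul]
  refine (norm_sum_le _ _).trans (Finset.sum_le_sum fun α hα => ?_)
  have hαl : (∑ i, α i) ≤ l := (Finset.mem_filter.mp hα).2
  -- norm of the term
  have hterm : ‖(-Complex.I) ^ (∑ i, α i) *
      VectorFourier.fourierIntegral Real.fourierChar volume (innerₗ ℝ) (fun t => (a α t : ℂ)) y *
      (∏ i, (ξ i : ℂ) ^ α i) * ((1 / Real.sqrt y : ℝ) : ℂ)‖
      = ‖𝓕 (fun t => (a α t : ℂ)) y‖ * (∏ i, |ξ i| ^ α i) * (1 / Real.sqrt y) := by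
    rw [norm_mul, norm_mul, norm_mul, norm_pow, norm_neg, Complex.norm_I, one_pow, one_mul,
      norm_prod]
    congr 1
    · congr 1
      exact Finset.prod_congr rfl fun i _ => by
        rw [norm_pow, Complex.norm_real, Real.norm_eq_abs]
    · rw [Complex.norm_real, Real.norm_eq_abs, abs_of_pos]
      positivity
  rw [hterm]
  have hprod : (∏ i, |ξ i| ^ α i) ≤ y ^ (∑ i, α i) := by
    rw [← Finset.prod_pow_eq_pow_sum]
    exact Finset.prod_le_prod (fun i _ => by positivity)
      (fun i _ => pow_le_pow_left₀ (abs_nonneg _) (abs_apply_le_lamm m ξ i) _)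
  have hylel : y ^ (∑ i, α i) ≤ (1 + y ^ 2) ^ l := by
    calc y ^ (∑ i, α i) ≤ (1 + y ^ 2) ^ (∑ i, α i) :=
          pow_le_pow_left₀ hy0.le (by nlinarith) _
      _ ≤ (1 + y ^ 2) ^ l := pow_le_pow_right₀ h1y hαl
  have hsqrt : 1 / Real.sqrt y ≤ 1 / Real.sqrt m := by
    apply one_div_le_one_div_of_le (Real.sqrt_pos.mpr hm) (Real.sqrt_le_sqrt hym)
  have hF : ‖𝓕 (fun t => (a α t : ℂ)) y‖ ≤ D α / (1 + y ^ 2) ^ (l + 2) := by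
    rw [le_div_iff₀ (by positivity), mul_comm]
    exact hD α y
  calc ‖𝓕 (fun t => (a α t : ℂ)) y‖ * (∏ i, |ξ i| ^ α i) * (1 / Real.sqrt y)
      ≤ (D α / (1 + y ^ 2) ^ (l + 2)) * ((1 + y ^ 2) ^ l) * (1 / Real.sqrt m) := by
        apply mul_le_mul _ hsqrt (by positivity)
          (mul_nonneg (div_nonneg (hD0 α) (by positivity)) (by positivity))
        apply mul_le_mul hF (hprod.trans hylel) (by positivity)
          (div_nonneg (hD0 α) (by positivity))
    _ = D α / Real.sqrt m * ((1 + y ^ 2) ^ 2)⁻¹ := by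
        rw [pow_add]
        field_simp

lemma continuous_KElem (hm : 0 < m)
    (ha : ∀ α, ContDiff ℝ (⊤ : ℕ∞) (a α)) (hc : ∀ α, HasCompactSupport (a α)) :
    Continuous (KElem m l a) := by
  apply continuous_finset_sum
  intro α _
  have hF : Continuous (𝓕 (fun t => (a α t : ℂ))) :=
    VectorFourier.fourierIntegral_continuous Real.continuous_fourierChar (by continuity)
      (integrable_ofReal_comp (ha α).continuous (hc α))
  apply Continuous.mul
  apply Continuous.mul
  apply Continuous.mul continuous_const (hF.comp (continuous_lamm m))
  · exact continuous_finset_prod _ fun i _ =>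
      (Complex.continuous_ofReal.comp ((continuous_apply i).comp (PiLp.continuous_ofLp 2 _))).pow _
  · apply Complex.continuous_ofReal.comp
    apply Continuous.div continuous_const (Real.continuous_sqrt.comp (continuous_lamm m))
    intro ξ
    exact ne_of_gt (Real.sqrt_pos.mpr (lamm_pos hm ξ))

lemma one_add_norm_sq_le (ξ : EuclideanSpace ℝ (Fin 3)) :
    (1 + ‖ξ‖) ^ 2 ≤ 2 * (1 + lamm m ξ ^ 2) := by
  have h1 : ‖ξ‖ ^ 2 ≤ lamm m ξ ^ 2 := by
    rw [lamm_sq, norm_sq_eq]; nlinarith [sq_nonneg m]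
  nlinarith [norm_nonneg ξ, sq_nonneg (1 - ‖ξ‖)]

lemma memLp_KElem (hm : 0 < m)
    (ha : ∀ α, ContDiff ℝ (⊤ : ℕ∞) (a α)) (hc : ∀ α, HasCompactSupport (a α)) :
    MemLp (KElem m l a) 2 (volume : Measure (EuclideanSpace ℝ (Fin 3))) := by
  obtain ⟨C, hC0, hC⟩ := KElem_bound (l := l) hm ha hc
  have hcont := continuous_KElem (l := l) hm ha hc
  rw [memLp_two_iff_integrable_sq_norm hcont.aestronglyMeasurable]
  have hint : Integrable (fun ξ : EuclideanSpace ℝ (Fin 3) => (1 + ‖ξ‖) ^ (-(8:ℝ))) volume := by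
    apply integrable_one_add_norm
    simp [finrank_euclideanSpace]
    norm_num
  apply Integrable.mono' ((hint.const_mul (16 * C ^ 2)))
    ((hcont.norm.pow 2).aestronglyMeasurable)
  filter_upwards with ξ
  have hb := hC ξ
  have h2 := one_add_norm_sq_le (m := m) ξ
  have h1ξ : (0:ℝ) < 1 + ‖ξ‖ := by have := norm_nonneg ξ; linarith
  have hyp : (0:ℝ) < 1 + lamm m ξ ^ 2 := by nlinarith [lamm_sq m ξ, sumsq_nonneg ξ, sq_nonneg m, lamm_pos hm ξ]
  have hrpow : (1 + ‖ξ‖) ^ (-(8:ℝ)) = ((1 + ‖ξ‖) ^ (8:ℕ))⁻¹ := by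
    rw [Real.rpow_neg h1ξ.le, ← Real.rpow_natCast]
    norm_num
  simp only [Pi.pow_apply]
  rw [Real.norm_eq_abs, _root_.abs_of_nonneg (by positivity : (0:ℝ) ≤ ‖KElem m l a ξ‖ ^ 2), hrpow]
  -- ‖KElem ξ‖^2 ≤ C^2 * ((1+y²)^2)⁻¹^2 and ((1+y²)^4)⁻¹ ≤ 16 ((1+‖ξ‖)^8)⁻¹
  have step1 : ‖KElem m l a ξ‖ ^ 2 ≤ C ^ 2 * (((1 + lamm m ξ ^ 2) ^ 2)⁻¹) ^ 2 := by
    rw [← mul_pow]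
    exact pow_le_pow_left₀ (norm_nonneg _) hb 2
  have step2 : (((1 + lamm m ξ ^ 2) ^ 2)⁻¹) ^ 2 ≤ 16 * ((1 + ‖ξ‖) ^ (8:ℕ))⁻¹ := by
    rw [← inv_pow, ← pow_mul]
    have h8 : (1 + ‖ξ‖) ^ (8:ℕ) ≤ 16 * (1 + lamm m ξ ^ 2) ^ 4 := by
      calc (1 + ‖ξ‖) ^ (8:ℕ) = ((1 + ‖ξ‖) ^ 2) ^ 4 := by ring
        _ ≤ (2 * (1 + lamm m ξ ^ 2)) ^ 4 := pow_le_pow_left₀ (by positivity) h2 4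
        _ = 16 * (1 + lamm m ξ ^ 2) ^ 4 := by ring
    have hi1 : (0:ℝ) < (1 + lamm m ξ ^ 2) ^ (2*2) := by positivity
    have hi2 : (0:ℝ) < (1 + ‖ξ‖) ^ (8:ℕ) := by positivity
    rw [inv_pow, ← one_div, ← div_eq_mul_inv, div_le_div_iff₀ hi1 hi2]
    calc 1 * (1 + ‖ξ‖) ^ (8:ℕ) = (1 + ‖ξ‖) ^ (8:ℕ) := one_mul _
      _ ≤ 16 * (1 + lamm m ξ ^ 2) ^ 4 := h8
      _ = 16 * (1 + lamm m ξ ^ 2) ^ (2*2) := by norm_num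
  calc ‖KElem m l a ξ‖ ^ 2 ≤ C ^ 2 * (((1 + lamm m ξ ^ 2) ^ 2)⁻¹) ^ 2 := step1
    _ ≤ C ^ 2 * (16 * ((1 + ‖ξ‖) ^ (8:ℕ))⁻¹) := mul_le_mul_of_nonneg_left step2 (by positivity)
    _ = 16 * C ^ 2 * ((1 + ‖ξ‖) ^ (8:ℕ))⁻¹ := by ring

lemma fourier_mul_const (g : ℝ → ℂ) (c : ℂ) (x : ℝ) :
    𝓕 (fun t => c * g t) x = c * 𝓕 g x := by
  simp_rw [Real.fourier_real_eq, Circle.smul_def]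
  rw [← integral_const_mul]
  congr 1; funext v; simp only [smul_eq_mul]; ring

lemma fourier_deriv_eq {f : ℝ → ℝ} (hf : ContDiff ℝ (⊤ : ℕ∞) f) (hc : HasCompactSupport f)
    (x : ℝ) :
    𝓕 (fun t => ((-(2 * Real.pi)⁻¹ * deriv f t : ℝ) : ℂ)) x
      = (-Complex.I * x) * 𝓕 (fun t => (f t : ℂ)) x := by
  have h1 : (fun t => ((-(2 * Real.pi)⁻¹ * deriv f t : ℝ) : ℂ))
      = fun t => ((-(2 * Real.pi)⁻¹ : ℝ) : ℂ) * ((deriv f t : ℝ) : ℂ) := by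
    funext t; push_cast; ring
  rw [h1, fourier_mul_const]
  have hd : 𝓕 (fun t => ((deriv f t : ℝ) : ℂ)) x
      = (2 * Real.pi * I * x) • (𝓕 (fun t => (f t : ℂ)) x) := by
    rw [← deriv_ofReal_comp hf,
      Real.fourier_deriv (integrable_ofReal_comp hf.continuous hc)
        (diffble_ofReal_comp hf)
        (by rw [deriv_ofReal_comp hf]
            exact integrable_ofReal_comp (contDiff_deriv hf).continuous hc.deriv)]
  rw [hd, smul_eq_mul]
  have hπ : (Real.pi : ℂ) ≠ 0 := Complex.ofReal_ne_zero.mpr Real.pi_ne_zero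
  push_cast
  field_simp

lemma KElem_deriv_coeff (ha : ∀ α, ContDiff ℝ (⊤ : ℕ∞) (a α))
    (hc : ∀ α, HasCompactSupport (a α)) (ξ : EuclideanSpace ℝ (Fin 3)) :
    KElem m l (fun α t => -(2 * Real.pi)⁻¹ * deriv (a α) t) ξ
      = (-Complex.I * lamm m ξ) * KElem m l a ξ := by
  rw [KElem, KElem, Finset.mul_sum]
  refine Finset.sum_congr rfl fun α _ => ?_
  rw [show VectorFourier.fourierIntegral Real.fourierChar volume (innerₗ ℝ) (fun t => ((-(2 * Real.pi)⁻¹ * deriv (a α) t : ℝ) : ℂ)) (lamm m ξ) = 𝓕 (fun t => ((-(2 * Real.pi)⁻¹ * deriv (a α) t : ℝ) : ℂ)) (lamm m ξ) from rfl,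
    show VectorFourier.fourierIntegral Real.fourierChar volume (innerₗ ℝ) (fun t => (a α t : ℂ)) (lamm m ξ) = 𝓕 (fun t => (a α t : ℂ)) (lamm m ξ) from rfl,
    fourier_deriv_eq (ha α) (hc α)]
  ring


end KAux

open FourierTransform Complex in
/-- For every nonzero `v ∈ K^l_m` there is `w ∈ K^l_m` with `Im⟨v, w⟩ ≠ 0`;
i.e. the symplectic form `(v,w) ↦ Im⟨v,w⟩` is nondegenerate on `K^l_m`. -/
theorem Kset_symplectic (m : ℝ) (hm : 0 < m) (l : ℕ) :
    ∀ v ∈ Kset m l, v ≠ 0 →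
      ∃ w ∈ Kset m l, (@inner ℂ _ _ v w).im ≠ 0 := by
  rintro v ⟨a, ha, hca, hae⟩ hv0
  set b : (Fin 3 → ℕ) → ℝ → ℝ := fun α t => -(2 * Real.pi)⁻¹ * deriv (a α) t with hb
  have hbs : ∀ α, ContDiff ℝ (⊤ : ℕ∞) (b α) :=
    fun α => contDiff_const.mul (contDiff_deriv (ha α))
  have hbc : ∀ α, HasCompactSupport (b α) := by
    intro α
    have : b α = (fun _ => -(2 * Real.pi)⁻¹ : ℝ → ℝ) * deriv (a α) := rfl
    rw [this]
    exact (hca α).deriv.mul_left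
  have hw : MemLp (KElem m l b) 2 (volume : Measure (EuclideanSpace ℝ (Fin 3))) :=
    memLp_KElem hm hbs hbc
  refine ⟨hw.toLp _, ⟨b, hbs, hbc, hw.coeFn_toLp⟩, ?_⟩
  set w := hw.toLp _ with hwdef
  -- pointwise identity for the inner product integrand
  have hptwise : ∀ᵐ x ∂(volume : Measure (EuclideanSpace ℝ (Fin 3))),
      (inner ℂ (v x) (w x) : ℂ) = -Complex.I * lamm m x * ((normSq (KElem m l a x) : ℝ) : ℂ) := by
    filter_upwards [hae, hw.coeFn_toLp] with x h1 h2
    rw [RCLike.inner_apply, h1, h2, KElem_deriv_coeff ha hca]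
    have : (-Complex.I * lamm m x * KElem m l a x) * (starRingEnd ℂ) (KElem m l a x)
        = -Complex.I * lamm m x * (KElem m l a x * (starRingEnd ℂ) (KElem m l a x)) := by ring
    rw [this, Complex.mul_conj]
  have hInt : Integrable (fun x => (inner ℂ (v x) (w x) : ℂ)) volume := L2.integrable_inner v w
  have him : (@inner ℂ _ _ v w).im
      = ∫ x, (-(lamm m x * normSq (KElem m l a x))) ∂volume := by
    rw [L2.inner_def]
    have h3 : (∫ x, (inner ℂ (v x) (w x) : ℂ) ∂volume).im
        = ∫ x, (inner ℂ (v x) (w x) : ℂ).im ∂volume := (integral_im hInt).symm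
    rw [h3]
    apply integral_congr_ae
    filter_upwards [hptwise] with x hx
    rw [hx]
    simp [Complex.mul_im]
  rw [him]
  intro hzero
  have hg : Integrable (fun x => lamm m x * normSq (KElem m l a x)) volume := by
    apply ((hInt.im).neg).congr
    filter_upwards [hptwise] with x hx
    simp only [Pi.neg_apply]
    rw [hx]; simp [Complex.mul_im]
  rw [integral_neg] at hzero
  have hzero' : ∫ x, lamm m x * normSq (KElem m l a x) ∂volume = 0 := by linarith [hzero]
  have hae0 : (fun x => lamm m x * normSq (KElem m l a x)) =ᵐ[volume] 0 := by
    rw [← integral_eq_zero_iff_of_nonneg _ hg] at *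
    · exact hzero'
    · intro x
      exact mul_nonneg (lamm_pos hm x).le (normSq_nonneg _)
  have hv0' : (v : EuclideanSpace ℝ (Fin 3) → ℂ) =ᵐ[volume] 0 := by
    filter_upwards [hae, hae0] with x h1 h2
    rw [h1]
    have hl := lamm_pos hm x
    have : normSq (KElem m l a x) = 0 := by
      by_contra hne
      have h2' : lamm m x * normSq (KElem m l a x) = 0 := h2
      nlinarith [normSq_nonneg (KElem m l a x), lt_of_le_of_ne (normSq_nonneg (KElem m l a x)) (Ne.symm hne)]
    simpa using (normSq_eq_zero.mp this)
  exact hv0 ((Lp.eq_zero_iff_ae_eq_zero).mpr hv0')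


end
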